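/- Let H, R be finite-dimensional complex Hilbert spaces, B = ℂ², and |ψ⟩ a unit vector in H⊗B⊗R. Let γ ∈ [0,1] and ε ∈ [0,1]. If there exists a (γ,ε)-radiation decoder against |ψ⟩, then there exists a (1, γ·ε)-radiation decoder against |ψ⟩. -/
import Mathlib


open Matrix BigOperators
open scoped ComplexOrder

noncomputable section

namespace BHRD

/-- A (qu)bit index. -/
abbrev Bit := ZMod 2

/-- The Pauli `X` matrix. -/
def Xm : Matrix Bit Bit ℂ := Matrix.of fun i j => if i = j + 1 then 1 else 0

/-- The Pauli `Z` matrix. -/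
def Zm : Matrix Bit Bit ℂ := Matrix.of fun i j => if i = j then (if j = 1 then -1 else 1) else 0

/-- The Pauli mask `X^x Z^z`. -/
def pauli (x z : Bit) : Matrix Bit Bit ℂ := Xm ^ x.val * Zm ^ z.val

/-- The EPR vector `(|00⟩+|11⟩)/√2`. -/
def epr : Bit × Bit → ℂ := fun p => if p.1 = p.2 then (((Real.sqrt 2 : ℝ) : ℂ))⁻¹ else 0

variable {dH dR : ℕ}

/-- The reduced density matrix of `|ψ⟩ ∈ H ⊗ B ⊗ R` on `B ⊗ R`, i.e. `Tr_H |ψ⟩⟨ψ|`. -/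
def rhoBR (ψ : Fin dH × Bit × Fin dR → ℂ) :
    Matrix (Bit × Fin dR) (Bit × Fin dR) ℂ :=
  Matrix.of fun p q => ∑ h : Fin dH, ψ (h, p) * (starRingEnd ℂ) (ψ (h, q))

/-- `(X^x Z^z) ⊗ I_R` acting on `B ⊗ R`. -/
def maskB (dR : ℕ) (x z : Bit) : Matrix (Bit × Fin dR) (Bit × Fin dR) ℂ :=
  Matrix.of fun p q => if p.2 = q.2 then pauli x z p.1 q.1 else 0

/-- The masked state `ρ^{xz} = (X^x Z^z ⊗ I) Tr_H|ψ⟩⟨ψ| (X^x Z^z ⊗ I)†`. -/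
def rhoXZ (ψ : Fin dH × Bit × Fin dR → ℂ) (x z : Bit) :
    Matrix (Bit × Fin dR) (Bit × Fin dR) ℂ :=
  maskB dR x z * rhoBR ψ * (maskB dR x z)ᴴ

/-- `K` is a family of Kraus operators for a (trace-preserving) quantum channel. -/
def IsKraus {α β : Type*} [Fintype α] [Fintype β] [DecidableEq β] {k : ℕ}
    (K : Fin k → Matrix α β ℂ) : Prop :=
  ∑ i, (K i)ᴴ * K i = 1

/-- Application of the channel with Kraus operators `K` to a state `ρ`. -/
def applyCh {α β : Type*} [Fintype α] [Fintype β] {k : ℕ}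
    (K : Fin k → Matrix α β ℂ) (ρ : Matrix β β ℂ) : Matrix α α ℂ :=
  ∑ i, K i * ρ * (K i)ᴴ

/-- The extension `id_B ⊗ A` of a channel `A : R → D ⊗ F` given by a Kraus operator `K`:
a Kraus operator from `B ⊗ R` to `B ⊗ D ⊗ F`. -/
def extB (K : Matrix (Bit × Bit) (Fin dR) ℂ) :
    Matrix (Bit × Bit × Bit) (Bit × Fin dR) ℂ :=
  Matrix.of fun p q => if p.1 = q.1 then K p.2 q.2 else 0

/-- The projector `I_{B⊗D} ⊗ |0⟩⟨0|_F` on `B ⊗ D ⊗ F`. -/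
def PF0 : Matrix (Bit × Bit × Bit) (Bit × Bit × Bit) ℂ :=
  Matrix.of fun p q =>
    if p.1 = q.1 ∧ p.2.1 = q.2.1 ∧ p.2.2 = 0 ∧ q.2.2 = 0 then 1 else 0

/-- The projector `|epr⟩⟨epr|_{B⊗D} ⊗ |0⟩⟨0|_F` on `B ⊗ D ⊗ F`. -/
def Pepr0 : Matrix (Bit × Bit × Bit) (Bit × Bit × Bit) ℂ :=
  Matrix.of fun p q =>
    (if p.2.2 = 0 ∧ q.2.2 = 0 then 1 else 0) *
      (epr (p.1, p.2.1) * (starRingEnd ℂ) (epr (q.1, q.2.1)))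

/-- `K` is (the Kraus family of) a `(γ,ε)`-radiation decoder against `ψ`. -/
def IsRadDecoder (ψ : Fin dH × Bit × Fin dR → ℂ) (γ ε : ℝ) {k : ℕ}
    (K : Fin k → Matrix (Bit × Bit) (Fin dR) ℂ) : Prop :=
  IsKraus K ∧
  γ ≤ ((PF0 * applyCh (fun i => extB (K i)) (rhoBR ψ)).trace).re ∧
  ((PF0 * applyCh (fun i => extB (K i)) (rhoBR ψ)).trace).re * (1/4 + (3/4) * ε) ≤
    ((Pepr0 * applyCh (fun i => extB (K i)) (rhoBR ψ)).trace).re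

/-- The projector `I_P ⊗ |0⟩⟨0|_F` on `P ⊗ F`. -/
def QF0 : Matrix ((Bit × Bit) × Bit) ((Bit × Bit) × Bit) ℂ :=
  Matrix.of fun p q => if p.1 = q.1 ∧ p.2 = 0 ∧ q.2 = 0 then 1 else 0

/-- The projector `|x,z⟩⟨x,z|_P ⊗ |0⟩⟨0|_F` on `P ⊗ F`. -/
def Qxz0 (x z : Bit) : Matrix ((Bit × Bit) × Bit) ((Bit × Bit) × Bit) ℂ :=
  Matrix.of fun p q => if p = ((x, z), 0) ∧ q = ((x, z), 0) then 1 else 0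

/-- `K` is (the Kraus family of) a `(γ,ε)`-superdense decoder against `ψ`. -/
def IsSupDecoder (ψ : Fin dH × Bit × Fin dR → ℂ) (γ ε : ℝ) {k : ℕ}
    (K : Fin k → Matrix ((Bit × Bit) × Bit) (Bit × Fin dR) ℂ) : Prop :=
  IsKraus K ∧
  γ ≤ (1/4) * ∑ x : Bit, ∑ z : Bit, ((QF0 * applyCh K (rhoXZ ψ x z)).trace).re ∧
  ((1/4) * ∑ x : Bit, ∑ z : Bit, ((QF0 * applyCh K (rhoXZ ψ x z)).trace).re) *
      (1/4 + (3/4) * ε) ≤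
    (1/4) * ∑ x : Bit, ∑ z : Bit, ((Qxz0 x z * applyCh K (rhoXZ ψ x z)).trace).re

end BHRD

namespace BHRD

/- AUX START -/
lemma bit_sum {M : Type*} [AddCommMonoid M] (f : Bit → M) : ∑ x : Bit, f x = f 0 + f 1 := by
  rw [show (Finset.univ : Finset Bit) = {0, 1} by decide]; simp

lemma bit_cases (b : Bit) : b = 0 ∨ b = 1 := by revert b; decide

/-- `I_D ⊗ |0⟩⟨0|_F` on `D ⊗ F`. -/
def P0s : Matrix (Bit × Bit) (Bit × Bit) ℂ :=
  Matrix.of fun p q => if p.1 = q.1 ∧ p.2 = 0 ∧ q.2 = 0 then 1 else 0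

/-- `(√2)⁻¹ |d,0⟩⟨d',1|` on `D ⊗ F`. -/
def Es (d d' : Bit) : Matrix (Bit × Bit) (Bit × Bit) ℂ :=
  Matrix.of fun p q => if p = (d, 0) ∧ q = (d', 1) then (((Real.sqrt 2 : ℝ) : ℂ))⁻¹ else 0

/-- `I_B ⊗ A` on `B ⊗ D ⊗ F`. -/
def ext2 (A : Matrix (Bit × Bit) (Bit × Bit) ℂ) :
    Matrix (Bit × Bit × Bit) (Bit × Bit × Bit) ℂ :=
  Matrix.of fun p q => if p.1 = q.1 then A p.2 q.2 else 0

/-- `I_B ⊗ C` on `B ⊗ R`. -/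
def extR {dR : ℕ} (C : Matrix (Fin dR) (Fin dR) ℂ) :
    Matrix (Bit × Fin dR) (Bit × Fin dR) ℂ :=
  Matrix.of fun p q => if p.1 = q.1 then C p.2 q.2 else 0

lemma sqc : (((Real.sqrt 2 : ℝ) : ℂ))⁻¹ * (((Real.sqrt 2 : ℝ) : ℂ))⁻¹ = 2⁻¹ := by
  rw [← mul_inv, ← Complex.ofReal_mul, Real.mul_self_sqrt (by norm_num)]; norm_num

lemma trace_sandwich {n m : Type*} [Fintype n] [Fintype m] {ι : Type*} [Fintype ι]
    (L : ι → Matrix n m ℂ) (P : Matrix n n ℂ) (ρ : Matrix m m ℂ) :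
    (P * ∑ i, L i * ρ * (L i)ᴴ).trace = ((∑ i, (L i)ᴴ * P * L i) * ρ).trace := by
  rw [Finset.mul_sum, Finset.sum_mul, Matrix.trace_sum, Matrix.trace_sum]
  refine Finset.sum_congr rfl fun i _ => ?_
  have h1 : P * (L i * ρ * (L i)ᴴ) = P * L i * ρ * (L i)ᴴ := by
    simp only [Matrix.mul_assoc]
  rw [h1, Matrix.trace_mul_cycle]
  congr 1
  simp only [Matrix.mul_assoc]

lemma ext2_adj (A : Matrix (Bit × Bit) (Bit × Bit) ℂ) : (ext2 A)ᴴ = ext2 Aᴴ := by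
  ext p q
  simp only [ext2, conjTranspose_apply, Matrix.of_apply]
  split_ifs with h1 h2 h3 <;> simp_all [eq_comm]

lemma ext2_mul (A B : Matrix (Bit × Bit) (Bit × Bit) ℂ) :
    ext2 A * ext2 B = ext2 (A * B) := by
  ext ⟨a, u⟩ ⟨c, v⟩
  simp only [ext2, Matrix.mul_apply, Matrix.of_apply, Fintype.sum_prod_type, bit_sum]
  rcases bit_cases a with h1 | h1 <;> rcases bit_cases c with h2 | h2 <;>
    subst h1 <;> subst h2 <;> simp

lemma ext2_one : ext2 1 = (1 : Matrix (Bit × Bit × Bit) (Bit × Bit × Bit) ℂ) := by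
  ext p q
  simp only [ext2, Matrix.one_apply, Matrix.of_apply, Prod.ext_iff]
  split_ifs <;> tauto

lemma ext2_add (A B : Matrix (Bit × Bit) (Bit × Bit) ℂ) :
    ext2 (A + B) = ext2 A + ext2 B := by
  ext p q
  simp only [ext2, Matrix.add_apply, Matrix.of_apply]
  split_ifs <;> simp

lemma extB_mul {dR : ℕ} (A : Matrix (Bit × Bit) (Bit × Bit) ℂ)
    (K : Matrix (Bit × Bit) (Fin dR) ℂ) :
    extB (A * K) = ext2 A * extB K := by
  ext ⟨a, u⟩ ⟨c, v⟩
  simp only [ext2, extB, Matrix.mul_apply, Matrix.of_apply, Fintype.sum_prod_type, bit_sum]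
  rcases bit_cases a with h1 | h1 <;> rcases bit_cases c with h2 | h2 <;>
    subst h1 <;> subst h2 <;> simp

lemma extB_adj_extB {dR : ℕ} (K K' : Matrix (Bit × Bit) (Fin dR) ℂ) :
    (extB K)ᴴ * extB K' = extR (Kᴴ * K') := by
  ext ⟨a, u⟩ ⟨c, v⟩
  simp only [extR, extB, Matrix.mul_apply, conjTranspose_apply, Matrix.of_apply,
    Fintype.sum_prod_type, bit_sum]
  rcases bit_cases a with h1 | h1 <;> rcases bit_cases c with h2 | h2 <;>
    subst h1 <;> subst h2 <;> simp [Finset.sum_add_distrib]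

lemma extR_one {dR : ℕ} : extR (1 : Matrix (Fin dR) (Fin dR) ℂ) = 1 := by
  ext p q
  simp only [extR, Matrix.one_apply, Matrix.of_apply, Prod.ext_iff]
  split_ifs <;> tauto

lemma extR_sum {dR k : ℕ} (C : Fin k → Matrix (Fin dR) (Fin dR) ℂ) :
    ∑ i, extR (C i) = extR (∑ i, C i) := by
  ext p q
  simp only [extR, Matrix.sum_apply, Matrix.of_apply]
  split_ifs <;> simp

lemma rhoBR_trace {dH dR : ℕ} (ψ : Fin dH × Bit × Fin dR → ℂ)
    (hψ : ∑ p, Complex.normSq (ψ p) = 1) : (rhoBR ψ).trace = 1 := by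
  have h2 := hψ
  rw [Fintype.sum_prod_type] at h2
  simp only [rhoBR, Matrix.trace, Matrix.diag_apply, Matrix.of_apply, Complex.mul_conj]
  rw [Finset.sum_comm]
  exact_mod_cast h2

lemma P0s_herm : P0sᴴ = P0s := by
  ext p q
  simp only [P0s, conjTranspose_apply, Matrix.of_apply]
  split_ifs with h1 h2 h3
  · simp
  · exact absurd ⟨h1.1.symm, h1.2.2, h1.2.1⟩ h2
  · exact absurd ⟨h3.1.symm, h3.2.2, h3.2.1⟩ h1
  · simp

lemma P0s_mul_P0s : P0s * P0s = P0s := by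
  ext ⟨a, b⟩ ⟨c, d⟩
  simp only [Matrix.mul_apply, P0s, Matrix.of_apply, Fintype.sum_prod_type, bit_sum]
  rcases bit_cases a with ha | ha <;> rcases bit_cases b with hb | hb <;>
    rcases bit_cases c with hc | hc <;> rcases bit_cases d with hd | hd <;>
    subst ha <;> subst hb <;> subst hc <;> subst hd <;> norm_num

lemma P0s_mul_Es (d d' : Bit) : P0s * Es d d' = Es d d' := by
  ext ⟨a, b⟩ ⟨c, e⟩
  simp only [Matrix.mul_apply, P0s, Es, Matrix.of_apply, Fintype.sum_prod_type, bit_sum]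
  rcases bit_cases a with ha | ha <;> rcases bit_cases b with hb | hb <;>
    rcases bit_cases c with hc | hc <;> rcases bit_cases e with he | he <;>
    rcases bit_cases d with hd | hd <;> rcases bit_cases d' with hd' | hd' <;>
    subst ha <;> subst hb <;> subst hc <;> subst he <;> subst hd <;> subst hd' <;>
    norm_num [Prod.ext_iff]

lemma Es_sum : ∑ d : Bit, ∑ d' : Bit, (Es d d')ᴴ * Es d d' = 1 - P0s := by
  ext ⟨a, b⟩ ⟨c, e⟩
  rcases bit_cases a with ha | ha <;> rcases bit_cases b with hb | hb <;>
    rcases bit_cases c with hc | hc <;> rcases bit_cases e with he | he <;>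
    subst ha <;> subst hb <;> subst hc <;> subst he <;>
    simp [Matrix.sum_apply, Matrix.one_apply, Matrix.mul_apply, conjTranspose_apply,
      P0s, Es, Fintype.sum_prod_type, bit_sum, Prod.ext_iff, sqc]

lemma PF0_eq : PF0 = ext2 P0s := by
  ext p q
  simp only [PF0, ext2, P0s, Matrix.of_apply]
  split_ifs <;> tauto

set_option maxHeartbeats 1000000 in
lemma P0_Pepr0 : ext2 P0s * Pepr0 = Pepr0 := by
  ext ⟨a, b, c⟩ ⟨a', b', c'⟩
  rcases bit_cases a with h1 | h1 <;> rcases bit_cases b with h2 | h2 <;>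
    rcases bit_cases c with h3 | h3 <;> rcases bit_cases a' with h4 | h4 <;>
    rcases bit_cases b' with h5 | h5 <;> rcases bit_cases c' with h6 | h6 <;>
    subst h1 <;> subst h2 <;> subst h3 <;> subst h4 <;> subst h5 <;> subst h6 <;>
    simp [Matrix.mul_apply, P0s, ext2, Pepr0, epr, Fintype.sum_prod_type, bit_sum,
      Prod.ext_iff, Complex.conj_ofReal, map_inv₀]

set_option maxHeartbeats 1000000 in
lemma Pepr0_P0 : Pepr0 * ext2 P0s = Pepr0 := by
  ext ⟨a, b, c⟩ ⟨a', b', c'⟩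
  rcases bit_cases a with h1 | h1 <;> rcases bit_cases b with h2 | h2 <;>
    rcases bit_cases c with h3 | h3 <;> rcases bit_cases a' with h4 | h4 <;>
    rcases bit_cases b' with h5 | h5 <;> rcases bit_cases c' with h6 | h6 <;>
    subst h1 <;> subst h2 <;> subst h3 <;> subst h4 <;> subst h5 <;> subst h6 <;>
    simp [Matrix.mul_apply, P0s, ext2, Pepr0, epr, Fintype.sum_prod_type, bit_sum,
      Prod.ext_iff, Complex.conj_ofReal, map_inv₀]

set_option maxHeartbeats 1600000 in
lemma Es_Pepr0 :
    ∑ d : Bit, ∑ d' : Bit, ext2 ((Es d d')ᴴ) * Pepr0 * ext2 (Es d d') =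
      ((4 : ℝ)⁻¹) • (1 - ext2 P0s) := by
  ext ⟨a, b, c⟩ ⟨a', b', c'⟩
  rcases bit_cases a with h1 | h1 <;> rcases bit_cases b with h2 | h2 <;>
    rcases bit_cases c with h3 | h3 <;> rcases bit_cases a' with h4 | h4 <;>
    rcases bit_cases b' with h5 | h5 <;> rcases bit_cases c' with h6 | h6 <;>
    subst h1 <;> subst h2 <;> subst h3 <;> subst h4 <;> subst h5 <;> subst h6 <;>
    simp [Matrix.sum_apply, Matrix.one_apply, Matrix.mul_apply, conjTranspose_apply,
      P0s, Es, ext2, Pepr0, epr, Fintype.sum_prod_type, bit_sum, Prod.ext_iff, sqc,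
      Complex.conj_ofReal, map_inv₀] <;>
    (try rw [mul_right_comm, sqc]) <;> norm_num
/- AUX END -/
/- AUX2 START -/
lemma adj_sand {dR : ℕ} (A : Matrix (Bit × Bit) (Bit × Bit) ℂ)
    (K : Matrix (Bit × Bit) (Fin dR) ℂ) :
    (A * K)ᴴ * (A * K) = Kᴴ * (Aᴴ * A) * K := by
  rw [conjTranspose_mul]; simp only [Matrix.mul_assoc]

lemma big_sand {dR : ℕ} (A : Matrix (Bit × Bit) (Bit × Bit) ℂ)
    (Q : Matrix (Bit × Bit × Bit) (Bit × Bit × Bit) ℂ)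
    (K : Matrix (Bit × Bit) (Fin dR) ℂ) :
    (extB (A * K))ᴴ * Q * extB (A * K) =
      (extB K)ᴴ * (ext2 Aᴴ * Q * ext2 A) * extB K := by
  rw [extB_mul, conjTranspose_mul, ext2_adj]; simp only [Matrix.mul_assoc]

lemma ext2_sum {α : Type*} [Fintype α] (C : α → Matrix (Bit × Bit) (Bit × Bit) ℂ) :
    ∑ x, ext2 (C x) = ext2 (∑ x, C x) := by
  ext p q
  simp only [ext2, Matrix.sum_apply, Matrix.of_apply]
  split_ifs <;> simp

lemma extB_kraus {dR k : ℕ} (K : Fin k → Matrix (Bit × Bit) (Fin dR) ℂ)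
    (hK : IsKraus K) : ∑ i, (extB (K i))ᴴ * extB (K i) = 1 := by
  simp only [extB_adj_extB]
  rw [extR_sum, hK, extR_one]

/-- The Kraus family of the amplified decoder. -/
def newKraus {dR k : ℕ} (K : Fin k → Matrix (Bit × Bit) (Fin dR) ℂ) :
    Fin k ⊕ (Fin k × Bit × Bit) → Matrix (Bit × Bit) (Fin dR) ℂ :=
  Sum.elim (fun i => P0s * K i) (fun w => Es w.2.1 w.2.2 * K w.1)

lemma newKraus_sum {dR k : ℕ} {M : Type*} [AddCommMonoid M]
    (K : Fin k → Matrix (Bit × Bit) (Fin dR) ℂ)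
    (F : Matrix (Bit × Bit) (Fin dR) ℂ → M) :
    ∑ j, F (newKraus K ((Fintype.equivFin (Fin k ⊕ (Fin k × Bit × Bit))).symm j)) =
      (∑ i, F (P0s * K i)) + ∑ i : Fin k, ∑ d : Bit, ∑ d' : Bit, F (Es d d' * K i) := by
  rw [Equiv.sum_comp (Fintype.equivFin (Fin k ⊕ (Fin k × Bit × Bit))).symm
    (fun w => F (newKraus K w)), Fintype.sum_sum_type]
  simp only [newKraus, Sum.elim_inl, Sum.elim_inr, Fintype.sum_prod_type]

lemma middle_pull {n m : Type*} [Fintype n] [Fintype m]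
    (X : Matrix n m ℂ) (Mf : Bit → Bit → Matrix n n ℂ) :
    ∑ d : Bit, ∑ d' : Bit, Xᴴ * Mf d d' * X =
      Xᴴ * (∑ d : Bit, ∑ d', Mf d d') * X := by
  simp only [Matrix.mul_sum, Matrix.sum_mul]
/- AUX2 END -/

set_option maxHeartbeats 2000000 in
/-- if there exists a `(γ,ε)`-radiation decoder against `|ψ⟩`,
then there exists a `(1, γ·ε)`-radiation decoder against `|ψ⟩`. -/
theorem rad_decoder_amplify_confidence
    (dH dR : ℕ) (hdH : 1 ≤ dH) (hdR : 1 ≤ dR)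
    (ψ : Fin dH × Bit × Fin dR → ℂ)
    (hψ : ∑ p, Complex.normSq (ψ p) = 1)
    (γ ε : ℝ) (hγ : γ ∈ Set.Icc (0:ℝ) 1) (hε : ε ∈ Set.Icc (0:ℝ) 1)
    (hdec : ∃ (k : ℕ) (K : Fin k → Matrix (Bit × Bit) (Fin dR) ℂ),
      IsRadDecoder ψ γ ε K) :
    ∃ (k : ℕ) (K : Fin k → Matrix (Bit × Bit) (Fin dR) ℂ),
      IsRadDecoder ψ 1 (γ * ε) K := by
  obtain ⟨k, K, hK, hg, he⟩ := hdec
  have hρtr : (rhoBR ψ).trace = 1 := rhoBR_trace ψ hψ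
  have tsand : ∀ {κ : Type} [Fintype κ] (L : κ → Matrix (Bit × Bit) (Fin dR) ℂ)
      (P : Matrix (Bit × Bit × Bit) (Bit × Bit × Bit) ℂ),
      (P * ∑ i, extB (L i) * rhoBR ψ * (extB (L i))ᴴ).trace =
        ((∑ i, (extB (L i))ᴴ * P * extB (L i)) * rhoBR ψ).trace := by
    intro κ _ L P
    exact trace_sandwich (fun i => extB (L i)) P (rhoBR ψ)
  set g : ℂ := (PF0 * applyCh (fun i => extB (K i)) (rhoBR ψ)).trace with hgdef
  set a : ℂ := (Pepr0 * applyCh (fun i => extB (K i)) (rhoBR ψ)).trace with hadef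
  set K' : Fin (Fintype.card (Fin k ⊕ (Fin k × Bit × Bit))) →
      Matrix (Bit × Bit) (Fin dR) ℂ :=
    fun j => newKraus K ((Fintype.equivFin (Fin k ⊕ (Fin k × Bit × Bit))).symm j) with hK'
  -- the general sandwich-sum computation
  have key : ∀ Q : Matrix (Bit × Bit × Bit) (Bit × Bit × Bit) ℂ,
      ∑ j, (extB (K' j))ᴴ * Q * extB (K' j) =
        (∑ i, (extB (K i))ᴴ * (ext2 P0s * Q * ext2 P0s) * extB (K i)) +
        ∑ i, (extB (K i))ᴴ *
          (∑ d : Bit, ∑ d' : Bit, ext2 ((Es d d')ᴴ) * Q * ext2 (Es d d')) * extB (K i) := by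
    intro Q
    rw [hK']
    rw [newKraus_sum K (fun X => (extB X)ᴴ * Q * extB X)]
    congr 1
    · refine Finset.sum_congr rfl fun i _ => ?_
      rw [big_sand, P0s_herm]
    · refine Finset.sum_congr rfl fun i _ => ?_
      simp only [big_sand]
      rw [middle_pull]
  -- the PF0 computation
  have keyPF : ∑ j, (extB (K' j))ᴴ * PF0 * extB (K' j) = 1 := by
    rw [key PF0]
    have m1 : ext2 P0s * PF0 * ext2 P0s = ext2 P0s := by
      rw [PF0_eq, ext2_mul, ext2_mul, P0s_mul_P0s, P0s_mul_P0s]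
    have m2 : ∑ d : Bit, ∑ d' : Bit, ext2 ((Es d d')ᴴ) * PF0 * ext2 (Es d d') =
        ext2 (1 - P0s) := by
      have step : ∀ d d' : Bit, ext2 ((Es d d')ᴴ) * PF0 * ext2 (Es d d') =
          ext2 ((Es d d')ᴴ * Es d d') := by
        intro d d'
        rw [PF0_eq, ext2_mul, ext2_mul]
        congr 1
        rw [Matrix.mul_assoc, P0s_mul_Es]
      simp only [step, ext2_sum, Es_sum]
    rw [m1, m2, ← Finset.sum_add_distrib]
    have : ∀ i : Fin k, (extB (K i))ᴴ * ext2 P0s * extB (K i) +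
        (extB (K i))ᴴ * ext2 (1 - P0s) * extB (K i) =
        (extB (K i))ᴴ * extB (K i) := by
      intro i
      rw [← Matrix.add_mul, ← Matrix.mul_add, ← ext2_add,
        show P0s + (1 - P0s) = 1 by abel, ext2_one, Matrix.mul_one]
    rw [Finset.sum_congr rfl fun i _ => this i]
    exact extB_kraus K hK
  -- the Pepr0 computation
  have keyEpr : ∑ j, (extB (K' j))ᴴ * Pepr0 * extB (K' j) =
      (∑ i, (extB (K i))ᴴ * Pepr0 * extB (K i)) +
      (4 : ℝ)⁻¹ • ((1 : Matrix (Bit × Fin dR) (Bit × Fin dR) ℂ) -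
        ∑ i, (extB (K i))ᴴ * PF0 * extB (K i)) := by
    rw [key Pepr0]
    have m1 : ext2 P0s * Pepr0 * ext2 P0s = Pepr0 := by
      rw [P0_Pepr0, Pepr0_P0]
    have m2 : ∑ d : Bit, ∑ d' : Bit, ext2 ((Es d d')ᴴ) * Pepr0 * ext2 (Es d d') =
        (4 : ℝ)⁻¹ • (1 - ext2 P0s) := Es_Pepr0
    rw [m1, m2]
    congr 1
    have : ∀ i : Fin k, (extB (K i))ᴴ * ((4 : ℝ)⁻¹ • (1 - ext2 P0s)) * extB (K i) =
        (4 : ℝ)⁻¹ • ((extB (K i))ᴴ * extB (K i) -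
          (extB (K i))ᴴ * PF0 * extB (K i)) := by
      intro i
      rw [Matrix.mul_smul, Matrix.smul_mul]
      congr 1
      rw [Matrix.mul_sub, Matrix.mul_one, Matrix.sub_mul, PF0_eq, Matrix.mul_assoc]
    rw [Finset.sum_congr rfl fun i _ => this i, ← Finset.smul_sum,
      Finset.sum_sub_distrib, extB_kraus K hK]
  -- traces of the new decoder
  have hPF : (PF0 * applyCh (fun i => extB (K' i)) (rhoBR ψ)).trace = 1 := by
    rw [show applyCh (fun i => extB (K' i)) (rhoBR ψ) =
      ∑ i, extB (K' i) * rhoBR ψ * (extB (K' i))ᴴ from rfl, tsand K' PF0, keyPF,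
      Matrix.one_mul, hρtr]
  have hEpr : (Pepr0 * applyCh (fun i => extB (K' i)) (rhoBR ψ)).trace =
      a + (4 : ℝ)⁻¹ • (1 - g) := by
    rw [show applyCh (fun i => extB (K' i)) (rhoBR ψ) =
      ∑ i, extB (K' i) * rhoBR ψ * (extB (K' i))ᴴ from rfl, tsand K' Pepr0, keyEpr,
      Matrix.add_mul, Matrix.trace_add, Matrix.smul_mul, Matrix.trace_smul,
      Matrix.sub_mul, Matrix.trace_sub, Matrix.one_mul, hρtr]
    rw [← tsand K Pepr0, ← tsand K PF0]
    rw [hgdef, hadef]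
    rfl
  have hKraus : IsKraus K' := by
    rw [IsKraus, hK']
    rw [newKraus_sum K (fun X => Xᴴ * X)]
    have t1 : ∀ i : Fin k, (P0s * K i)ᴴ * (P0s * K i) = (K i)ᴴ * P0s * K i := by
      intro i
      rw [adj_sand, P0s_herm, P0s_mul_P0s]
    have t2 : ∀ i : Fin k, ∑ d : Bit, ∑ d' : Bit, (Es d d' * K i)ᴴ * (Es d d' * K i) =
        (K i)ᴴ * (1 - P0s) * K i := by
      intro i
      have t0 : ∀ d d' : Bit, (Es d d' * K i)ᴴ * (Es d d' * K i) =
          (K i)ᴴ * ((Es d d')ᴴ * Es d d') * (K i) := fun d d' => adj_sand _ _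
      simp only [t0]
      rw [middle_pull, Es_sum]
    simp only [t1]
    rw [Finset.sum_congr rfl fun i _ => t2 i, ← Finset.sum_add_distrib]
    have t3 : ∀ i : Fin k, (K i)ᴴ * P0s * K i + (K i)ᴴ * (1 - P0s) * K i =
        (K i)ᴴ * K i := by
      intro i
      rw [← Matrix.add_mul, ← Matrix.mul_add, show P0s + (1 - P0s) = 1 by abel,
        Matrix.mul_one]
    rw [Finset.sum_congr rfl fun i _ => t3 i]
    exact hK
  refine ⟨Fintype.card (Fin k ⊕ (Fin k × Bit × Bit)), K', hKraus, ?_, ?_⟩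
  · rw [hPF]
    norm_num
  · rw [hPF, hEpr]
    have h1 : (a + (4 : ℝ)⁻¹ • (1 - g)).re = a.re + (4 : ℝ)⁻¹ * (1 - g.re) := by
      simp [Complex.add_re, Complex.real_smul, Complex.mul_re, Complex.sub_re]
    rw [h1]
    have hge : γ * ε ≤ g.re * ε := mul_le_mul_of_nonneg_right hg hε.1
    simp only [Complex.one_re, one_mul]
    nlinarith [he, hge]

end BHRD
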